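/- For every finite simple graph G, the codegree of the stable set polytope satisfies codeg(P_G) ≤ χ(G) + 1, where χ(G) is the chromatic number of G. -/

import Mathlib

open Finset

noncomputable section

/-- The dilation `kP` of a set `P ⊆ ℝ^ι`. -/
def dilate {ι : Type*} (k : ℕ) (P : Set (ι → ℝ)) : Set (ι → ℝ) :=
  (fun x => (k : ℝ) • x) '' P

/-- A point of `ℝ^ι` is a lattice point if all its coordinates are integers. -/
def IsLatticePt {ι : Type*} (x : ι → ℝ) : Prop := ∀ i, ∃ m : ℤ, x i = m

/-- The codegree of a (full-dimensional lattice) polytope `P ⊆ ℝ^ι`: the smallest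
positive integer `k` such that the interior of `kP` contains a lattice point. -/
def codeg {ι : Type*} (P : Set (ι → ℝ)) : ℕ :=
  sInf {k | 0 < k ∧ ∃ x, IsLatticePt x ∧ x ∈ interior (dilate k P)}

/-- The stable set polytope of a simple graph: the convex hull of the indicator
vectors of the stable (independent) sets of `G`. -/
def stablePolytope {V : Type*} (G : SimpleGraph V) : Set (V → ℝ) :=
  convexHull ℝ {x | ∃ S : Set V, (∀ u ∈ S, ∀ v ∈ S, ¬ G.Adj u v) ∧
    x = S.indicator (fun _ => (1 : ℝ))}

section aux

variable {n : ℕ} (G : SimpleGraph (Fin n))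

lemma zero_mem_stablePolytope : (0 : Fin n → ℝ) ∈ stablePolytope G :=
  subset_convexHull ℝ _ ⟨∅, by simp, by funext v; simp⟩

lemma convex_stablePolytope : Convex ℝ (stablePolytope G) := convex_convexHull ℝ _

lemma single_mem_stablePolytope (i : Fin n) :
    Set.indicator {i} (fun _ => (1 : ℝ)) ∈ stablePolytope G :=
  subset_convexHull ℝ _ ⟨{i}, by
    rintro u rfl v rfl
    exact G.irrefl, rfl⟩

lemma simplex_subset_stablePolytope (y : Fin n → ℝ) (hy : ∀ i, 0 ≤ y i)
    (hsum : ∑ i, y i ≤ 1) : y ∈ stablePolytope G := by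
  classical
  have h := (convex_stablePolytope G).sum_mem (t := (Finset.univ : Finset (Option (Fin n))))
    (w := fun o => Option.elim o (1 - ∑ i, y i) y)
    (z := fun o => Option.elim o 0 (fun i => Set.indicator {i} (fun _ => (1 : ℝ))))
    (by
      rintro (_ | i) _
      · simpa using hsum
      · exact hy i)
    (by rw [Fintype.sum_option]; simp)
    (by
      rintro (_ | i) _
      · exact zero_mem_stablePolytope G
      · exact single_mem_stablePolytope G i)
  convert h using 1
  rw [Fintype.sum_option]
  funext j
  simp only [Option.elim, smul_zero, zero_add, Finset.sum_apply, Pi.add_apply, Pi.smul_apply,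
    Pi.zero_apply, smul_eq_mul, Set.indicator_apply, Set.mem_singleton_iff]
  rw [Finset.sum_congr rfl (fun i _ => by rw [mul_ite, mul_one, mul_zero])]
  simp [Finset.sum_ite_eq']

end aux

/-- `codeg(P_G) ≤ χ(G) + 1`. -/
theorem stmt3 {n : ℕ} (G : SimpleGraph (Fin n)) :
    (codeg (stablePolytope G) : ℕ∞) ≤ G.chromaticNumber + 1 := by
  classical
  set P := stablePolytope G with hPdef
  have hcol := G.colorable_chromaticNumber_of_fintype
  set c : ℕ := ENat.toNat G.chromaticNumber with hc
  have hχ : (c : ℕ∞) = G.chromaticNumber := by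
    refine ENat.coe_toNat ?_
    have := G.colorable_of_fintype.chromaticNumber_le
    exact ne_top_of_le_ne_top (by simp) this
  obtain ⟨C⟩ := hcol
  -- the key membership
  set ε : ℝ := ((n : ℝ) + 1)⁻¹ with hε
  have hεpos : 0 < ε := by positivity
  have hεle : ε ≤ 1 := by
    rw [hε]
    rw [inv_le_one_iff₀]
    right; linarith [Nat.cast_nonneg (α := ℝ) n]
  -- q = (1/c) * all-ones vector is in P (when n > 0)
  have hkey : (c + 1) ∈ {k | 0 < k ∧ ∃ x, IsLatticePt x ∧ x ∈ interior (dilate k P)} := by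
    refine ⟨Nat.succ_pos c, (fun _ => (1 : ℝ)), fun i => ⟨1, by norm_num⟩, ?_⟩
    rw [mem_interior]
    refine ⟨{x : Fin n → ℝ | (∀ i, 1 - ε < x i) ∧ ∑ i, x i < n * (1 - ε) + 1}, ?_, ?_, ?_, ?_⟩
    · -- U ⊆ dilate (c+1) P
      rintro x ⟨hx1, hx2⟩
      set y : Fin n → ℝ := fun i => x i - (1 - ε) with hy
      have hy0 : ∀ i, 0 ≤ y i := fun i => by have := hx1 i; simp [hy]; linarith
      have hysum : ∑ i, y i ≤ 1 := by
        have : ∑ i, y i = (∑ i, x i) - n * (1 - ε) := by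
          simp [hy, Finset.sum_sub_distrib, mul_comm]; ring
        rw [this]; linarith
      have hyP : y ∈ P := simplex_subset_stablePolytope G y hy0 hysum
      -- the scaled all-ones point
      have hqP : ((1 - ε) / c) • (fun _ => (1 : ℝ)) ∈ P := by
        rcases Nat.eq_zero_or_pos c with hc0 | hc0
        · have hn0 : n = 0 := by
            by_contra hn
            exact (Fin.cast hc0 (C ⟨0, Nat.pos_of_ne_zero hn⟩)).elim0
          subst hn0
          refine simplex_subset_stablePolytope G _ ?_ ?_
          · exact fun i => i.elim0
          · simp
        · have hcne : (c : ℝ) ≠ 0 := Nat.cast_ne_zero.mpr hc0.ne'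
          have hmem : ∀ j : Fin c,
              Set.indicator {v | C v = j} (fun _ => (1 : ℝ)) ∈ P := by
            intro j
            refine subset_convexHull ℝ _ ⟨{v | C v = j}, ?_, rfl⟩
            intro u hu v hv hadj
            exact C.valid hadj (hu.trans hv.symm)
          have hq : ((c : ℝ)⁻¹) • (fun _ => (1 : ℝ)) ∈ P := by
            have h := (convex_stablePolytope G).sum_mem
              (t := (Finset.univ : Finset (Fin c)))
              (w := fun _ => (c : ℝ)⁻¹)
              (z := fun j => Set.indicator {v | C v = j} (fun _ => (1 : ℝ)))
              (fun j _ => by positivity)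
              (by simp [Finset.card_univ, mul_comm, hcne])
              (fun j _ => hmem j)
            convert h using 1
            funext v
            simp only [Finset.sum_apply, Pi.smul_apply, smul_eq_mul,
              Set.indicator_apply, Set.mem_setOf_eq]
            rw [Finset.sum_congr rfl (fun j _ => by rw [mul_ite, mul_one, mul_zero])]
            simp [Finset.sum_ite_eq']
          have h2 := (convex_stablePolytope G) hq (zero_mem_stablePolytope G)
            (by linarith : (0:ℝ) ≤ 1 - ε) hεpos.le (by ring)
          convert h2 using 1
          funext v
          simp only [Pi.add_apply, Pi.smul_apply, Pi.zero_apply, smul_eq_mul]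
          ring
      -- convex combination
      have hz := (convex_stablePolytope G) hqP hyP
        (by positivity : (0:ℝ) ≤ (c : ℝ) / (c + 1))
        (by positivity : (0:ℝ) ≤ 1 / ((c : ℝ) + 1))
        (by field_simp)
      refine ⟨_, hz, ?_⟩
      funext i
      have hcne : (c : ℝ) ≠ 0 := by
        intro h
        exact (Fin.cast (Nat.cast_eq_zero.mp h) (C i)).elim0
      simp only [Pi.smul_apply, Pi.add_apply, smul_eq_mul]
      push_cast
      field_simp
      ring
    · -- open
      refine IsOpen.inter ?_ ?_
      · show IsOpen {x : Fin n → ℝ | ∀ i, 1 - ε < x i}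
        have heq : {x : Fin n → ℝ | ∀ i, 1 - ε < x i}
            = ⋂ i, (fun x : Fin n → ℝ => x i) ⁻¹' Set.Ioi (1 - ε) := by
          ext x; simp
        rw [heq]
        exact isOpen_iInter_of_finite fun i => isOpen_Ioi.preimage (continuous_apply i)
      · exact isOpen_lt (continuous_finset_sum _ fun i _ => continuous_apply i)
          continuous_const
    · -- membership of all-ones
      intro i
      show 1 - ε < 1
      linarith
    · show ∑ _i : Fin n, (1 : ℝ) < n * (1 - ε) + 1
      rw [Finset.sum_const, Finset.card_univ, Fintype.card_fin, nsmul_eq_mul, mul_one]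
      have h1 : (n : ℝ) * ε = n / (n + 1) := by rw [hε]; ring
      have h2 : (n : ℝ) / (n + 1) < 1 := by
        rw [div_lt_one (by positivity)]; linarith
      nlinarith [Nat.cast_nonneg (α := ℝ) n]
  have hle : codeg P ≤ c + 1 := Nat.sInf_le hkey
  calc (codeg P : ℕ∞) ≤ ((c + 1 : ℕ) : ℕ∞) := by exact_mod_cast hle
    _ = G.chromaticNumber + 1 := by rw [← hχ]; push_cast; rfl
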